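/- If R is a ring whose every finitely generated left R-module is cu-serial, then R is a left FGC ring (every finitely generated left R-module is a direct sum of cyclic modules) and R has finite uniform dimension as a left module over itself. -/

import Mathlib

/-- The radical of a module: intersection of all maximal submodules. -/
def ModRadical (R M : Type*) [Ring R] [AddCommGroup M] [Module R M] : Submodule R M :=
  sInf {N : Submodule R M | IsCoatom N}

/-- A module is cyclic if it is generated by one element. -/
def IsCyclicMod (R M : Type*) [Ring R] [AddCommGroup M] [Module R M] : Prop :=
  ∃ x : M, Submodule.span R {x} = ⊤

/-- A module is uniform if it is nonzero and any two nonzero submodules intersect nontrivially. -/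
def IsUniformMod (R M : Type*) [Ring R] [AddCommGroup M] [Module R M] : Prop :=
  Nontrivial M ∧ ∀ A B : Submodule R M, A ≠ ⊥ → B ≠ ⊥ → A ⊓ B ≠ ⊥

/-- A module is cyclic-uniform uniserial (cu-uniserial) if it is nonzero and for every
nonzero finitely generated submodule `K`, the quotient `K / Rad K` is cyclic and uniform. -/
def IsCUUniserial (R M : Type*) [Ring R] [AddCommGroup M] [Module R M] : Prop :=
  Nontrivial M ∧ ∀ K : Submodule R M, K ≠ ⊥ → K.FG →
    IsCyclicMod R (↥K ⧸ ModRadical R ↥K) ∧ IsUniformMod R (↥K ⧸ ModRadical R ↥K)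

section Aux

variable {R : Type*} [Ring R]

/-- Uniformity of a submodule, expressed in the ambient lattice. -/
def UnifSub {M : Type*} [AddCommGroup M] [Module R M] (P : Submodule R M) : Prop :=
  ∀ A B : Submodule R M, A ≤ P → B ≤ P → A ≠ ⊥ → B ≠ ⊥ → A ⊓ B ≠ ⊥

variable {M N : Type*} [AddCommGroup M] [Module R M] [AddCommGroup N] [Module R N]

lemma mapNeBot (f : M →ₗ[R] N) {S A : Submodule R M} (hS : LinearMap.ker f ⊓ S = ⊥)
    (hA : A ≤ S) (h : A ≠ ⊥) : Submodule.map f A ≠ ⊥ := by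
  obtain ⟨x, hx, hx0⟩ := Submodule.ne_bot_iff A |>.mp h
  intro hb
  have hfx : f x ∈ Submodule.map f A := ⟨x, hx, rfl⟩
  rw [hb, Submodule.mem_bot] at hfx
  have : x ∈ LinearMap.ker f ⊓ S := ⟨LinearMap.mem_ker.mpr hfx, hA hx⟩
  rw [hS, Submodule.mem_bot] at this
  exact hx0 this

lemma mapInf (f : M →ₗ[R] N) {S A B : Submodule R M} (hS : LinearMap.ker f ⊓ S = ⊥)
    (hA : A ≤ S) (hB : B ≤ S) :
    Submodule.map f A ⊓ Submodule.map f B ≤ Submodule.map f (A ⊓ B) := by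
  rintro x ⟨⟨a, ha, rfl⟩, ⟨b, hb, hba⟩⟩
  have : a - b ∈ LinearMap.ker f ⊓ S := by
    refine ⟨LinearMap.mem_ker.mpr ?_, Submodule.sub_mem _ (hA ha) (hB hb)⟩
    rw [map_sub, hba, sub_self]
  rw [hS, Submodule.mem_bot, sub_eq_zero] at this
  exact ⟨a, ⟨ha, this ▸ hb⟩, rfl⟩

lemma eqMapOfLeMap (f : M →ₗ[R] N) {P : Submodule R M} {A : Submodule R N}
    (hA : A ≤ Submodule.map f P) : A = Submodule.map f (Submodule.comap f A ⊓ P) := by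
  apply le_antisymm
  · intro a ha
    obtain ⟨p, hp, rfl⟩ := hA ha
    exact ⟨p, ⟨Submodule.mem_comap.mpr ha, hp⟩, rfl⟩
  · rintro x ⟨p, ⟨hp1, _⟩, rfl⟩
    exact hp1

lemma unifMap (f : M →ₗ[R] N) {S P : Submodule R M} (hker : LinearMap.ker f ⊓ S = ⊥)
    (hPS : P ≤ S) (h : UnifSub (R := R) P) : UnifSub (R := R) (Submodule.map f P) := by
  intro A B hA hB hA0 hB0
  set A' := Submodule.comap f A ⊓ P with hA'def
  set B' := Submodule.comap f B ⊓ P with hB'def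
  have hmapA : Submodule.map f A' = A := (eqMapOfLeMap f hA).symm
  have hmapB : Submodule.map f B' = B := (eqMapOfLeMap f hB).symm
  have hA'0 : A' ≠ ⊥ := fun hbot => hA0 (by rw [← hmapA, hbot, Submodule.map_bot])
  have hB'0 : B' ≠ ⊥ := fun hbot => hB0 (by rw [← hmapB, hbot, Submodule.map_bot])
  have hC : A' ⊓ B' ≠ ⊥ := h A' B' inf_le_right inf_le_right hA'0 hB'0
  have h1 : Submodule.map f (A' ⊓ B') ≠ ⊥ :=
    mapNeBot f hker (le_trans (le_trans inf_le_left inf_le_right) hPS) hC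
  intro hAB
  apply h1
  rw [eq_bot_iff, ← hAB]
  exact le_inf (le_trans (Submodule.map_mono inf_le_left) hmapA.le)
    (le_trans (Submodule.map_mono inf_le_right) hmapB.le)

lemma iSupSplit {ι : Type*} (U : ι → Submodule R M) (i : ι) :
    (⨆ j, U j) = U i ⊔ ⨆ (j) (_ : j ≠ i), U j := by
  apply le_antisymm
  · apply iSup_le
    intro j
    by_cases hj : j = i
    · subst hj; exact le_sup_left
    · exact le_trans (le_iSup₂ (f := fun (j : ι) (_ : j ≠ i) => U j) j hj) le_sup_right
  · exact sup_le (le_iSup U i) (iSup₂_le fun j _ => le_iSup U j)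

/-- A direct sum of essential submodules of the components of an (independent, exhaustive)
family is essential. -/
lemma essSum {n : ℕ} (U E : Fin n → Submodule R M) (hind : iSupIndep U)
    (_hE : ∀ i, E i ≤ U i)
    (hess : ∀ i, ∀ C : Submodule R M, C ≤ U i → C ⊓ E i = ⊥ → C = ⊥)
    (hsup : (⨆ i, U i) = ⊤) :
    ∀ C : Submodule R M, C ⊓ (⨆ i, E i) = ⊥ → C = ⊥ := by
  have key : ∀ s : Finset (Fin n), ∀ y ∈ ⨆ j ∈ s, U j, y ≠ 0 →
      ∃ r : R, r • y ∈ (⨆ i, E i) ∧ r • y ≠ 0 := by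
    intro s
    induction s using Finset.induction_on with
    | empty =>
      intro y hy hy0
      simp only [Finset.notMem_empty, iSup_false, iSup_bot, Submodule.mem_bot] at hy
      exact absurd hy hy0
    | @insert i s his ih =>
      intro y hy hy0
      rw [Finset.iSup_insert] at hy
      obtain ⟨u, hu, z, hz, rfl⟩ := Submodule.mem_sup.mp hy
      by_cases hu0 : u = 0
      · subst hu0
        rw [zero_add] at hy0 ⊢
        exact ih _ hz hy0
      · -- get a nonzero multiple of u inside E i
        have hspan : Submodule.span R {u} ≠ ⊥ := by
          intro hb
          have := Submodule.mem_span_singleton_self (R := R) u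
          rw [hb, Submodule.mem_bot] at this
          exact hu0 this
        have hspanle : Submodule.span R {u} ≤ U i :=
          Submodule.span_le.mpr (Set.singleton_subset_iff.mpr hu)
        have hne : Submodule.span R {u} ⊓ E i ≠ ⊥ := fun hb => hspan (hess i _ hspanle hb)
        obtain ⟨c, ⟨hc1, hc2⟩, hc0⟩ := Submodule.ne_bot_iff _ |>.mp hne
        obtain ⟨r, rfl⟩ := Submodule.mem_span_singleton.mp hc1
        by_cases hz0 : r • z = 0
        · refine ⟨r, ?_, ?_⟩
          · rw [smul_add, hz0, add_zero]
            exact Submodule.mem_iSup_of_mem i hc2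
          · rw [smul_add, hz0, add_zero]; exact hc0
        · obtain ⟨r', hr'1, hr'2⟩ := ih _ (Submodule.smul_mem _ r hz) hz0
          refine ⟨r' * r, ?_, ?_⟩
          · rw [mul_smul, smul_add, smul_add]
            exact Submodule.add_mem _
              (Submodule.mem_iSup_of_mem i (Submodule.smul_mem _ r' hc2)) hr'1
          · rw [mul_smul, smul_add, smul_add]
            intro hzero
            have hdisj : Disjoint (U i) (⨆ j ∈ (s : Set (Fin n)), U j) :=
              hind.disjoint_biSup (by simpa using his)
            have hmem1 : r' • r • u ∈ U i := Submodule.smul_mem _ _ (Submodule.smul_mem _ _ hu)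
            have hmemz : r' • r • z ∈ ⨆ j ∈ (s : Set (Fin n)), U j := by
              have : z ∈ ⨆ j ∈ (s : Set (Fin n)), U j := by
                simpa using hz
              exact Submodule.smul_mem _ _ (Submodule.smul_mem _ _ this)
            have hmem2 : r' • r • u ∈ ⨆ j ∈ (s : Set (Fin n)), U j := by
              have : r' • r • u = -(r' • r • z) := by
                rw [eq_neg_iff_add_eq_zero]; exact hzero
              rw [this]; exact Submodule.neg_mem _ hmemz
            have hlb : Submodule.span R {r' • r • u} ≤ ⊥ := le_trans (le_inf
              (Submodule.span_le.mpr (Set.singleton_subset_iff.mpr hmem1))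
              (Submodule.span_le.mpr (Set.singleton_subset_iff.mpr hmem2))) hdisj.le_bot
            have : r' • r • u = 0 := by
              simpa [Submodule.mem_bot] using hlb (Submodule.mem_span_singleton_self _)
            rw [this, zero_add] at hzero
            exact hr'2 hzero
  intro C hC
  rw [eq_bot_iff]
  intro x hx
  by_contra hx0
  have hxtop : x ∈ ⨆ j ∈ (Finset.univ : Finset (Fin n)), U j := by
    have : (⨆ j ∈ (Finset.univ : Finset (Fin n)), U j) = ⨆ j, U j := by
      simp
    rw [this, hsup]; trivial
  obtain ⟨r, hr1, hr2⟩ := key Finset.univ x hxtop (by simpa using hx0)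
  have : r • x ∈ C ⊓ ⨆ i, E i := ⟨Submodule.smul_mem _ _ hx, hr1⟩
  rw [hC, Submodule.mem_bot] at this
  exact hr2 this

/-- Key dimension-counting lemma: a module which is the direct sum of `n` uniform submodules
cannot contain an independent family of `n+1` nonzero submodules. -/
lemma mainLemma : ∀ (n : ℕ) (M : Type u) [AddCommGroup M] [Module R M]
    (U : Fin n → Submodule R M), iSupIndep U → (⨆ i, U i) = ⊤ →
    (∀ i, UnifSub (R := R) (U i)) →
    ∀ V : Fin (n + 1) → Submodule R M, iSupIndep V → (∀ j, V j ≠ ⊥) → False := by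
  intro n
  induction n with
  | zero =>
    intro M _ _ U _ hsup _ V _ hV
    have hbot : (⊤ : Submodule R M) = ⊥ := by
      rw [← hsup]; exact iSup_of_empty U
    exact hV 0 (le_bot_iff.mp (hbot ▸ le_top))
  | succ m ih =>
    intro M _ _ U hUind hUsup hUunif V hVind hV0
    set W : Submodule R M := ⨆ k : Fin (m + 1), V k.succ with hWdef
    have hWle : W ≤ ⨆ (j) (_ : j ≠ (0 : Fin (m + 2))), V j :=
      iSup_le fun k => le_iSup₂ (f := fun (j : Fin (m + 2)) (_ : j ≠ 0) => V j)
        k.succ (Fin.succ_ne_zero k)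
    have hV0W : V 0 ⊓ W = ⊥ := ((hVind 0).mono_right hWle).eq_bot
    by_cases hcase : ∀ i, W ⊓ U i ≠ ⊥
    · -- every component meets W: then W contains an essential submodule, contradiction with V 0
      have hbot := essSum U (fun i => W ⊓ U i) hUind (fun i => inf_le_right)
        (fun i C hC hCE => by
          by_contra hC0
          exact hUunif i C (W ⊓ U i) hC inf_le_right hC0 (hcase i) hCE)
        hUsup (V 0) ?_
      · exact hV0 0 hbot
      · rw [eq_bot_iff, ← hV0W]
        exact le_inf inf_le_left (le_trans inf_le_right (iSup_le fun i => inf_le_left))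
    · push_neg at hcase
      obtain ⟨i, hi⟩ := hcase
      -- project away from U i
      set f : M →ₗ[R] M ⧸ U i := (U i).mkQ with hfdef
      have hker : LinearMap.ker f = U i := Submodule.ker_mkQ (U i)
      set S : Submodule R M := ⨆ k : Fin m, U (i.succAbove k) with hSdef
      have hSle : S ≤ ⨆ (j) (_ : j ≠ i), U j :=
        iSup_le fun k => le_iSup₂ (f := fun (j : Fin (m + 1)) (_ : j ≠ i) => U j)
          (i.succAbove k) (Fin.succAbove_ne i k)
      have hkerS : LinearMap.ker f ⊓ S = ⊥ := by
        rw [hker]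
        exact ((hUind i).mono_right hSle).eq_bot
      have hkerW : LinearMap.ker f ⊓ W = ⊥ := by
        rw [hker, inf_comm]; exact hi
      set U' : Fin m → Submodule R (M ⧸ U i) :=
        fun k => Submodule.map f (U (i.succAbove k)) with hU'def
      set V' : Fin (m + 1) → Submodule R (M ⧸ U i) :=
        fun k => Submodule.map f (V k.succ) with hV'def
      -- independence of U'
      have hU'ind : iSupIndep U' := by
        intro k
        have h1 : (⨆ (l) (_ : l ≠ k), U' l) =
            Submodule.map f (⨆ (l) (_ : l ≠ k), U (i.succAbove l)) := by
          rw [Submodule.map_iSup]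
          exact iSup_congr fun l => by rw [Submodule.map_iSup]
        rw [disjoint_iff, h1]
        have hAS : U (i.succAbove k) ≤ S := le_iSup (fun k => U (i.succAbove k)) k
        have hBS : (⨆ (l) (_ : l ≠ k), U (i.succAbove l)) ≤ S :=
          iSup₂_le fun l _ => le_iSup (fun k => U (i.succAbove k)) l
        have hAB : U (i.succAbove k) ⊓ (⨆ (l) (_ : l ≠ k), U (i.succAbove l)) = ⊥ := by
          have hle2 : (⨆ (l) (_ : l ≠ k), U (i.succAbove l)) ≤
              ⨆ (j) (_ : j ≠ i.succAbove k), U j :=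
            iSup₂_le fun l hl => le_iSup₂ (f := fun (j : Fin (m + 1)) (_ : j ≠ i.succAbove k) => U j)
              (i.succAbove l) (fun hc => hl (Fin.succAbove_right_injective hc))
          exact ((hUind (i.succAbove k)).mono_right hle2).eq_bot
        rw [eq_bot_iff]
        exact le_trans (mapInf f hkerS hAS hBS) (by rw [hAB, Submodule.map_bot])
      -- sup of U' is everything
      have hU'sup : (⨆ k, U' k) = ⊤ := by
        have h1 : (⨆ k, U' k) = Submodule.map f S := (Submodule.map_iSup _ _).symm
        have h2 : Submodule.map f (U i) = ⊥ := by
          rw [eq_bot_iff]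
          rintro x ⟨y, hy, rfl⟩
          rw [Submodule.mem_bot, hfdef]
          exact (Submodule.Quotient.mk_eq_zero _).mpr hy
        have h3 : S = ⨆ (j) (_ : j ≠ i), U j := by
          apply le_antisymm hSle
          apply iSup₂_le
          intro j hj
          obtain ⟨k, rfl⟩ := Fin.exists_succAbove_eq hj
          exact le_iSup (fun k => U (i.succAbove k)) k
        have h4 : Submodule.map f ⊤ = ⊤ := by
          rw [Submodule.map_top, Submodule.range_mkQ]
        rw [h1, ← h4, ← hUsup, iSupSplit U i, Submodule.map_sup, h2, bot_sup_eq, h3]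
      -- uniformity of U'
      have hU'unif : ∀ k, UnifSub (R := R) (U' k) := fun k =>
        unifMap f hkerS (le_iSup (fun k => U (i.succAbove k)) k) (hUunif (i.succAbove k))
      -- independence of V'
      have hV'ind : iSupIndep V' := by
        intro k
        have h1 : (⨆ (l) (_ : l ≠ k), V' l) =
            Submodule.map f (⨆ (l) (_ : l ≠ k), V l.succ) := by
          rw [Submodule.map_iSup]
          exact iSup_congr fun l => by rw [Submodule.map_iSup]
        rw [disjoint_iff, h1]
        have hAS : V k.succ ≤ W := le_iSup (fun k => V k.succ) k
        have hBS : (⨆ (l) (_ : l ≠ k), V l.succ) ≤ W :=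
          iSup₂_le fun l _ => le_iSup (fun k => V k.succ) l
        have hAB : V k.succ ⊓ (⨆ (l) (_ : l ≠ k), V l.succ) = ⊥ := by
          have hle2 : (⨆ (l) (_ : l ≠ k), V l.succ) ≤ ⨆ (j) (_ : j ≠ k.succ), V j :=
            iSup₂_le fun l hl => le_iSup₂ (f := fun (j : Fin (m + 2)) (_ : j ≠ k.succ) => V j)
              l.succ (fun hc => hl (Fin.succ_injective _ hc))
          exact ((hVind k.succ).mono_right hle2).eq_bot
        rw [eq_bot_iff]
        exact le_trans (mapInf f hkerW hAS hBS) (by rw [hAB, Submodule.map_bot])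
      have hV'0 : ∀ k, V' k ≠ ⊥ := fun k =>
        mapNeBot f hkerW (le_iSup (fun k => V k.succ) k) (hV0 k.succ)
      exact ih (M ⧸ U i) U' hU'ind hU'sup hU'unif V' hV'ind hV'0

lemma coatomicOfFinite [Module.Finite R M] : IsCoatomic (Submodule R M) :=
  CompleteLattice.coatomic_of_top_compact
    ((Submodule.fg_iff_compact _).mp (Module.finite_def.mp ‹_›))

/-- Nakayama-style: the radical of a finitely generated module is superfluous. -/
lemma radSmall [Module.Finite R M] {X : Submodule R M} (h : X ⊔ ModRadical R M = ⊤) :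
    X = ⊤ := by
  have := coatomicOfFinite (R := R) (M := M)
  rcases eq_top_or_exists_le_coatom X with h' | ⟨m, hm, hXm⟩
  · exact h'
  · exfalso
    have h1 : ModRadical R M ≤ m := sInf_le hm
    have : (⊤ : Submodule R M) ≤ m := h ▸ sup_le hXm h1
    exact hm.1 (top_le_iff.mp this)

lemma quotSimple {m : Submodule R M} (hm : IsCoatom m) (P : Submodule R (M ⧸ m)) :
    P = ⊥ ∨ P = ⊤ := by
  have h1 : m ≤ Submodule.comap m.mkQ P := by
    intro x hx
    rw [Submodule.mem_comap]
    rw [show m.mkQ x = 0 from (Submodule.Quotient.mk_eq_zero _).mpr hx]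
    exact P.zero_mem
  have hPmap : Submodule.map m.mkQ (Submodule.comap m.mkQ P) = P := by
    rw [Submodule.map_comap_eq, Submodule.range_mkQ, top_inf_eq]
  rcases eq_or_lt_of_le h1 with heq | hlt
  · left
    rw [← hPmap, ← heq, eq_bot_iff]
    rintro x ⟨y, hy, rfl⟩
    rw [Submodule.mem_bot]
    exact (Submodule.Quotient.mk_eq_zero _).mpr hy
  · right
    rw [← hPmap, hm.2 _ hlt, Submodule.map_top, Submodule.range_mkQ]

/-- The radical is stable under endomorphisms. -/
lemma radStable (f : M →ₗ[R] M) {x : M} (hx : x ∈ ModRadical R M) :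
    f x ∈ ModRadical R M := by
  apply Submodule.mem_sInf.mpr
  intro m hm
  set g : M →ₗ[R] M ⧸ m := m.mkQ ∘ₗ f with hgdef
  have hgoal : g x = 0 → f x ∈ m := fun h => by
    rw [hgdef] at h
    exact (Submodule.Quotient.mk_eq_zero _).mp h
  by_cases h0 : LinearMap.ker g = ⊤
  · exact hgoal (by rw [← LinearMap.mem_ker, h0]; trivial)
  · have hco : IsCoatom (LinearMap.ker g) := by
      constructor
      · exact h0
      · intro N hN
        rcases quotSimple hm (Submodule.map g N) with hP | hP
        · exfalso
          apply not_le_of_gt hN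
          intro y hy
          rw [LinearMap.mem_ker]
          have : g y ∈ Submodule.map g N := ⟨y, hy, rfl⟩
          rw [hP, Submodule.mem_bot] at this
          exact this
        · rw [eq_top_iff]
          intro y _
          have : g y ∈ Submodule.map g N := by rw [hP]; trivial
          obtain ⟨z, hz, hzy⟩ := this
          have : y - z ∈ LinearMap.ker g := by
            rw [LinearMap.mem_ker, map_sub, hzy, sub_self]
          have : y - z ∈ N := hN.le this
          simpa using N.add_mem this hz
    have : ModRadical R M ≤ LinearMap.ker g := sInf_le hco
    exact hgoal (this hx)

/-- Lifting cyclicity through the radical quotient (Nakayama). -/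
lemma cyclicOfQuot [Module.Finite R M]
    (h : IsCyclicMod R (M ⧸ ModRadical R M)) : IsCyclicMod R M := by
  obtain ⟨xb, hxb⟩ := h
  obtain ⟨x, rfl⟩ := Submodule.mkQ_surjective _ xb
  refine ⟨x, radSmall ?_⟩
  rw [eq_top_iff]
  intro y _
  have h1 : (ModRadical R M).mkQ y ∈ Submodule.span R {(ModRadical R M).mkQ x} := by
    rw [hxb]; trivial
  rw [← Set.image_singleton, ← Submodule.map_span] at h1
  obtain ⟨z, hz, hzy⟩ := h1
  have : y - z ∈ ModRadical R M := by
    rw [← Submodule.ker_mkQ (ModRadical R M), LinearMap.mem_ker, map_sub, hzy, sub_self]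
  have := Submodule.add_mem _ (Submodule.mem_sup_left hz) (Submodule.mem_sup_right this)
  simpa using this

lemma radMapLe (e : M ≃ₗ[R] N) :
    Submodule.map (e : M →ₗ[R] N) (ModRadical R M) ≤ ModRadical R N := by
  apply le_sInf
  intro m hm
  rw [Submodule.map_le_iff_le_comap]
  have hco : IsCoatom (Submodule.comap (e : M →ₗ[R] N) m) := by
    have := (Submodule.orderIsoMapComap e).symm.isCoatom_iff m
    rw [Submodule.orderIsoMapComap_symm_apply] at this
    exact this.mpr hm
  exact sInf_le hco

lemma radMap (e : M ≃ₗ[R] N) :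
    Submodule.map (e : M →ₗ[R] N) (ModRadical R M) = ModRadical R N := by
  apply le_antisymm (radMapLe e)
  have h1 := radMapLe e.symm
  have h2 := Submodule.map_mono (f := (e : M →ₗ[R] N)) h1
  rw [← Submodule.map_comp] at h2
  have h3 : ∀ P : Submodule R N,
      Submodule.map ((e : M →ₗ[R] N) ∘ₗ (e.symm : N →ₗ[R] M)) P = P := by
    intro P
    ext y
    simp [Submodule.mem_map]
  rw [h3] at h2
  exact h2

lemma cycEquiv (e : M ≃ₗ[R] N) (h : IsCyclicMod R M) : IsCyclicMod R N := by
  obtain ⟨x, hx⟩ := h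
  refine ⟨(e : M →ₗ[R] N) x, ?_⟩
  have : Submodule.span R {(e : M →ₗ[R] N) x} =
      Submodule.map (e : M →ₗ[R] N) (Submodule.span R {x}) := by
    rw [Submodule.map_span, Set.image_singleton]
  rw [this, hx, Submodule.map_top, LinearEquiv.range]

/-- A cu-uniserial module is uniform. -/
lemma cuuUniform {M : Type*} [AddCommGroup M] [Module R M] (h : IsCUUniserial R M) :
    IsUniformMod R M := by
  obtain ⟨hnt, hKprop⟩ := h
  refine ⟨hnt, ?_⟩
  intro A B hA hB hAB
  obtain ⟨a, haA, ha0⟩ := Submodule.ne_bot_iff A |>.mp hA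
  obtain ⟨b, hbB, hb0⟩ := Submodule.ne_bot_iff B |>.mp hB
  set K : Submodule R M := Submodule.span R {a} ⊔ Submodule.span R {b} with hKdef
  have haK : a ∈ K := Submodule.mem_sup_left (Submodule.mem_span_singleton_self a)
  have hbK : b ∈ K := Submodule.mem_sup_right (Submodule.mem_span_singleton_self b)
  have hKfg : K.FG := Submodule.FG.sup (Submodule.fg_span_singleton a)
    (Submodule.fg_span_singleton b)
  have hKne : K ≠ ⊥ := by
    intro hb'
    apply ha0
    have := haK
    rw [hb', Submodule.mem_bot] at this
    exact this
  obtain ⟨_, hunif⟩ := hKprop K hKne hKfg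
  haveI : Module.Finite R ↥K := Module.Finite.iff_fg.mpr hKfg
  set A' : Submodule R ↥K := Submodule.comap K.subtype (Submodule.span R {a}) with hA'def
  set B' : Submodule R ↥K := Submodule.comap K.subtype (Submodule.span R {b}) with hB'def
  have hspanA : Submodule.span R {a} ≤ A := Submodule.span_le.mpr (by simpa using haA)
  have hspanB : Submodule.span R {b} ≤ B := Submodule.span_le.mpr (by simpa using hbB)
  -- A' ⊔ B' = ⊤
  have hsup : A' ⊔ B' = ⊤ := by
    rw [eq_top_iff]
    rintro ⟨x, hx⟩ _
    obtain ⟨u, hu, v, hv, huv⟩ := Submodule.mem_sup.mp hx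
    have huK : u ∈ K := Submodule.mem_sup_left hu
    have hvK : v ∈ K := Submodule.mem_sup_right hv
    have : (⟨x, hx⟩ : ↥K) = ⟨u, huK⟩ + ⟨v, hvK⟩ := by
      ext; simpa using huv.symm
    rw [this]
    exact Submodule.add_mem _ (Submodule.mem_sup_left (by simpa [hA'def] using hu))
      (Submodule.mem_sup_right (by simpa [hB'def] using hv))
  -- A' ⊓ B' = ⊥
  have hinf : A' ⊓ B' = ⊥ := by
    rw [eq_bot_iff]
    rintro ⟨x, hx⟩ ⟨h1, h2⟩
    have hxA : x ∈ A := hspanA h1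
    have hxB : x ∈ B := hspanB h2
    have : x ∈ A ⊓ B := ⟨hxA, hxB⟩
    rw [hAB, Submodule.mem_bot] at this
    simpa [Submodule.mem_bot] using this
  have hA'0 : A' ≠ ⊥ := by
    intro hb'
    apply ha0
    have : (⟨a, haK⟩ : ↥K) ∈ A' := by
      simpa [hA'def] using Submodule.mem_span_singleton_self a
    rw [hb', Submodule.mem_bot] at this
    simpa using this
  have hB'0 : B' ≠ ⊥ := by
    intro hb'
    apply hb0
    have : (⟨b, hbK⟩ : ↥K) ∈ B' := by
      simpa [hB'def] using Submodule.mem_span_singleton_self b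
    rw [hb', Submodule.mem_bot] at this
    simpa using this
  have hcompl : IsCompl A' B' := ⟨disjoint_iff.mpr hinf, codisjoint_iff.mpr hsup⟩
  set π : ↥K →ₗ[R] ↥K := A'.subtype ∘ₗ Submodule.linearProjOfIsCompl A' B' hcompl with hπdef
  have hπA : ∀ y : ↥K, y ∈ A' → π y = y := fun y hy => by
    simp [hπdef, Submodule.linearProjOfIsCompl, Submodule.linearProjOfIsCompl_apply_left hcompl ⟨y, hy⟩]
  have hπB : ∀ y : ↥K, y ∈ B' → π y = 0 := fun y hy => by
    simp [hπdef, Submodule.linearProjOfIsCompl, Submodule.linearProjOfIsCompl_apply_right hcompl ⟨y, hy⟩]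
  set g := (ModRadical R ↥K).mkQ with hgdef
  have hAbar0 : Submodule.map g A' ≠ ⊥ := by
    intro hb'
    have hle : A' ≤ ModRadical R ↥K := by
      intro y hy
      have : g y ∈ Submodule.map g A' := ⟨y, hy, rfl⟩
      rw [hb', Submodule.mem_bot] at this
      rw [← Submodule.ker_mkQ (ModRadical R ↥K)]
      exact LinearMap.mem_ker.mpr this
    have htop : B' ⊔ ModRadical R ↥K = ⊤ := by
      rw [eq_top_iff, ← hsup]
      exact sup_le (le_trans hle le_sup_right) le_sup_left
    have hB'top : B' = ⊤ := radSmall htop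
    apply hA'0
    rw [eq_bot_iff, ← hinf]
    exact le_inf (le_refl _) (hB'top ▸ le_top)
  have hBbar0 : Submodule.map g B' ≠ ⊥ := by
    intro hb'
    have hle : B' ≤ ModRadical R ↥K := by
      intro y hy
      have : g y ∈ Submodule.map g B' := ⟨y, hy, rfl⟩
      rw [hb', Submodule.mem_bot] at this
      rw [← Submodule.ker_mkQ (ModRadical R ↥K)]
      exact LinearMap.mem_ker.mpr this
    have htop : A' ⊔ ModRadical R ↥K = ⊤ := by
      rw [eq_top_iff, ← hsup]
      exact sup_le le_sup_left (le_trans hle le_sup_right)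
    have hA'top : A' = ⊤ := radSmall htop
    apply hB'0
    rw [eq_bot_iff, ← hinf]
    exact le_inf (hA'top ▸ le_top) (le_refl _)
  have hbarinf : Submodule.map g A' ⊓ Submodule.map g B' = ⊥ := by
    rw [eq_bot_iff]
    rintro x ⟨⟨u, hu, rfl⟩, ⟨v, hv, hvu⟩⟩
    have huv : u - v ∈ ModRadical R ↥K := by
      rw [← Submodule.ker_mkQ (ModRadical R ↥K), LinearMap.mem_ker, map_sub]
      rw [show g v = g u from hvu]
      exact sub_self _
    have hu_rad : u ∈ ModRadical R ↥K := by
      have h1 : π (u - v) = u := by rw [map_sub, hπA u hu, hπB v hv, sub_zero]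
      rw [← h1]
      exact radStable π huv
    rw [Submodule.mem_bot, hgdef]
    exact (Submodule.Quotient.mk_eq_zero _).mpr hu_rad
  exact hunif.2 _ _ hAbar0 hBbar0 hbarinf

/-- Transfer of uniformity from a submodule (as a module) to the ambient lattice. -/
lemma cuuUnifSub {M : Type*} [AddCommGroup M] [Module R M] {P : Submodule R M}
    (h : IsCUUniserial R ↥P) : UnifSub (R := R) P := by
  have hu := cuuUniform h
  intro A B hA hB hA0 hB0
  set A₀ := Submodule.comap P.subtype A with hA₀def
  set B₀ := Submodule.comap P.subtype B with hB₀def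
  have hmapA : Submodule.map P.subtype A₀ = A := by
    rw [hA₀def, Submodule.map_comap_subtype, inf_eq_right.mpr hA]
  have hmapB : Submodule.map P.subtype B₀ = B := by
    rw [hB₀def, Submodule.map_comap_subtype, inf_eq_right.mpr hB]
  have hA₀0 : A₀ ≠ ⊥ := fun hb => hA0 (by rw [← hmapA, hb, Submodule.map_bot])
  have hB₀0 : B₀ ≠ ⊥ := fun hb => hB0 (by rw [← hmapB, hb, Submodule.map_bot])
  have hC := hu.2 A₀ B₀ hA₀0 hB₀0
  obtain ⟨x, hx, hx0⟩ := Submodule.ne_bot_iff _ |>.mp hC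
  apply Submodule.ne_bot_iff _ |>.mpr
  refine ⟨↑x, ⟨?_, ?_⟩, by simpa using hx0⟩
  · rw [← hmapA]; exact ⟨x, hx.1, rfl⟩
  · rw [← hmapB]; exact ⟨x, hx.2, rfl⟩

end Aux

section Assembly

variable {R : Type} [Ring R]

lemma finiteIndex {M : Type} [AddCommGroup M] [Module R M] [Module.Finite R M]
    {ι : Type} (N : ι → Submodule R M) (hind : iSupIndep N) (hsup : (⨆ i, N i) = ⊤)
    (hne : ∀ i, N i ≠ ⊥) : Finite ι := by
  have hcomp : IsCompactElement (⊤ : Submodule R M) :=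
    (Submodule.fg_iff_compact _).mp (Module.finite_def.mp ‹_›)
  obtain ⟨t, ht⟩ := (CompleteLattice.isCompactElement_iff_exists_le_iSup_of_le_iSup _).mp hcomp ι N (by rw [hsup])
  have hall : ∀ i, i ∈ t := by
    intro i
    by_contra hit
    apply hne i
    have h1 : N i ≤ t.sup N := le_trans le_top ht
    have h2 : t.sup N ≤ ⨆ (j) (_ : j ≠ i), N j := by
      apply Finset.sup_le
      intro j hj
      exact le_iSup₂ (f := fun (j : ι) (_ : j ≠ i) => N j) j
        (fun hc => hit (hc ▸ hj))
    exact (hind i).eq_bot_of_le (le_trans h1 h2)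
  have : (Set.univ : Set ι) ⊆ ↑t := fun i _ => hall i
  exact Set.finite_univ_iff.mp (t.finite_toSet.subset this)

end Assembly

theorem stmt17 {R : Type} [Ring R]
    (h : ∀ (M : Type) [AddCommGroup M] [Module R M], Module.Finite R M →
      ∃ (ι : Type) (_ : DecidableEq ι) (N : ι → Submodule R M), DirectSum.IsInternal N ∧
        ∀ i, IsCUUniserial R (N i)) :
    (∀ (M : Type) [AddCommGroup M] [Module R M], Module.Finite R M →
      ∃ (ι : Type) (_ : DecidableEq ι) (N : ι → Submodule R M), Finite ι ∧ DirectSum.IsInternal N ∧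
        ∀ i, ∃ x : M, N i = Submodule.span R {x}) ∧
    ¬ ∃ f : ℕ → Ideal R, (∀ n, f n ≠ ⊥) ∧ iSupIndep f := by
  constructor
  · intro M _ _ hfg
    obtain ⟨ι, dec, N, hInt, hcu⟩ := h M hfg
    have hind := hInt.submodule_iSupIndep
    have hsup := hInt.submodule_iSup_eq_top
    have hne : ∀ i, N i ≠ ⊥ := fun i => Submodule.nontrivial_iff_ne_bot.mp (hcu i).1
    have hfin : Finite ι := finiteIndex N hind hsup hne
    refine ⟨ι, dec, N, hfin, hInt, fun i => ?_⟩
    have hcompl : IsCompl (N i) (⨆ (j) (_ : j ≠ i), N j) := by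
      constructor
      · exact hind i
      · rw [codisjoint_iff, ← iSupSplit, hsup]
    set π := Submodule.linearProjOfIsCompl _ _ hcompl with hπdef
    have hπ : Function.Surjective π := fun y =>
      ⟨↑y, Submodule.linearProjOfIsCompl_apply_left hcompl y⟩
    haveI : Module.Finite R ↥(N i) := Module.Finite.of_surjective π hπ
    haveI hnt : Nontrivial ↥(N i) := (hcu i).1
    have hTne : (⊤ : Submodule R ↥(N i)) ≠ ⊥ := by
      haveI : Nontrivial ↥(⊤ : Submodule R ↥(N i)) :=
        (Submodule.topEquiv (R := R) (M := ↥(N i))).toEquiv.nontrivial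
      exact Submodule.nontrivial_iff_ne_bot.mp ‹_›
    obtain ⟨hcyc, -⟩ := (hcu i).2 ⊤ hTne (Module.finite_def.mp ‹_›)
    have e0 : (↥(⊤ : Submodule R ↥(N i))) ≃ₗ[R] ↥(N i) := Submodule.topEquiv
    have e1 := Submodule.Quotient.equiv (ModRadical R ↥(⊤ : Submodule R ↥(N i)))
      (ModRadical R ↥(N i)) e0 (radMap e0)
    have hcyc' := cycEquiv e1 hcyc
    obtain ⟨y, hy⟩ := cyclicOfQuot hcyc'
    refine ⟨↑y, ?_⟩
    have hmap := congrArg (Submodule.map (N i).subtype) hy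
    rw [Submodule.map_span, Set.image_singleton, Submodule.map_subtype_top] at hmap
    exact hmap.symm
  · rintro ⟨f, hf, hfind⟩
    obtain ⟨ι, dec, N, hInt, hcu⟩ := h R inferInstance
    have hNind := hInt.submodule_iSupIndep
    have hNsup := hInt.submodule_iSup_eq_top
    have hne : ∀ i, N i ≠ ⊥ := fun i => Submodule.nontrivial_iff_ne_bot.mp (hcu i).1
    have hfin : Finite ι := finiteIndex N hNind hNsup hne
    obtain ⟨n, ⟨e⟩⟩ := Finite.exists_equiv_fin ι
    exact mainLemma (R := R) n R (fun k => N (e.symm k))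
      (hNind.comp e.symm.injective)
      (by rw [e.symm.surjective.iSup_comp, hNsup])
      (fun k => cuuUnifSub (hcu (e.symm k)))
      (fun k : Fin (n + 1) => f k)
      (hfind.comp Fin.val_injective)
      (fun k => hf k)
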